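/- Fix T_1 < T_2 and p_1, p_2 > 0 with p_1 + p_2 = 1, and set T_∞ = p_1 T_1 + p_2 T_2. For η > 0 let w_η be the density w associated to the rates η_1 = p_1 η and η_2 = p_2 η. Then for every continuous function φ : [T_1, T_2] → ℝ, lim_{η → ∞} ∫_{T_1}^{T_2} φ(T) w_η(T) dT = p_1 φ(T_1) + p_2 φ(T_2). That is, the measures w_η(T) dT converge weakly to p_1 δ_{T_1} + p_2 δ_{T_2} as η → ∞. -/

import Mathlib

open MeasureTheory Filter Topology


lemma contRpowSub (c e : ℝ) (he : 0 < e) : Continuous fun x : ℝ => (c - x) ^ e := by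
  rw [continuous_iff_continuousAt]; intro x
  exact (continuous_const.sub continuous_id).continuousAt.rpow_const (Or.inr he.le)

lemma contRpowSub' (c e : ℝ) (he : 0 < e) : Continuous fun x : ℝ => (x - c) ^ e := by
  rw [continuous_iff_continuousAt]; intro x
  exact (continuous_id.sub continuous_const).continuousAt.rpow_const (Or.inr he.le)

lemma massInt (a b : ℝ) (s : ℝ) (hs : 0 < s) :
    ∫ x in a..b, (b - x) ^ (s - 1) = (b - a) ^ s / s := by
  have h := intervalIntegral.integral_comp_sub_left (a := a) (b := b)
    (fun y : ℝ => y ^ (s - 1)) b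
  rw [h, sub_self, integral_rpow (Or.inl (by linarith)), sub_add_cancel,
    Real.zero_rpow hs.ne', sub_zero]

lemma boundTendsto (ba c : ℝ) (hba : 0 < ba) (hc0 : 0 < c) (hcb : c < ba) :
    Tendsto (fun s : ℝ => s * ba ^ (-s) * c ^ (s - 1)) atTop (𝓝 0) := by
  have hr0 : 0 < c / ba := div_pos hc0 hba
  have hr1 : c / ba < 1 := (div_lt_one hba).2 hcb
  have hlog : 0 < -Real.log (c / ba) := by have := Real.log_neg hr0 hr1; linarith
  have h0 := (tendsto_rpow_mul_exp_neg_mul_atTop_nhds_zero 1 _ hlog).const_mul (1 / c)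
  rw [mul_zero] at h0
  refine h0.congr fun s => ?_
  rw [Real.rpow_one, neg_neg, ← Real.rpow_def_of_pos hr0,
    Real.div_rpow hc0.le hba.le, Real.rpow_sub hc0, Real.rpow_one,
    Real.rpow_neg hba.le]
  have h1 : ba ^ s ≠ 0 := (Real.rpow_pos_of_pos hba s).ne'
  field_simp

lemma leftLim (a b : ℝ) (hab : a < b) (g : ℝ → ℝ) (hg : ContinuousOn g (Set.Icc a b)) :
    Tendsto (fun s : ℝ => ∫ x in a..b, (s * (b - a) ^ (-s) * (b - x) ^ (s - 1)) * g x)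
      atTop (𝓝 (g a)) := by
  have hba : 0 < b - a := sub_pos.2 hab
  have key : Tendsto (fun s : ℝ => ∫ x in Set.Icc a b,
      (fun (s : ℝ) (x : ℝ) => s * (b - a) ^ (-s) * (b - x) ^ (s - 1)) s x • g x) atTop
      (𝓝 (g a)) := by
    apply tendsto_setIntegral_peak_smul_of_integrableOn_of_tendsto
      (x₀ := a) measurableSet_Icc measurableSet_Icc subset_rfl self_mem_nhdsWithin
      measure_Icc_lt_top.ne
    · -- nonneg
      filter_upwards [eventually_ge_atTop (0 : ℝ)] with s hs x hx
      have : (0:ℝ) ≤ b - x := sub_nonneg.2 hx.2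
      positivity
    · -- uniform convergence off neighborhoods of a
      intro u hu hau
      rcases Metric.isOpen_iff.1 hu a hau with ⟨δ, hδ, hball⟩
      set ε : ℝ := min δ ((b - a) / 2) with hεdef
      have hε0 : 0 < ε := lt_min hδ (by linarith)
      have hεle : ε ≤ (b - a) / 2 := min_le_right _ _
      set c : ℝ := b - a - ε with hcdef
      have hc0 : 0 < c := by simp only [hcdef]; linarith
      have hcb : c < b - a := by simp only [hcdef]; linarith
      have hB := boundTendsto (b - a) c hba hc0 hcb
      rw [Metric.tendstoUniformlyOn_iff]
      intro ε' hε'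
      filter_upwards [hB.eventually (gt_mem_nhds hε'), eventually_ge_atTop (1 : ℝ)]
        with s hBs hs1 x hx
      obtain ⟨hxI, hxu⟩ := hx
      have hxa : ε ≤ x - a := by
        have : x ∉ Metric.ball a δ := fun h => hxu (hball h)
        rw [Metric.mem_ball, Real.dist_eq, not_lt] at this
        have h2 : δ ≤ |x - a| := this
        rw [abs_of_nonneg (sub_nonneg.2 hxI.1)] at h2
        exact le_trans (min_le_left _ _) h2
      have hbx : 0 ≤ b - x := sub_nonneg.2 hxI.2
      have hbxc : b - x ≤ c := by simp only [hcdef]; linarith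
      have hφle : s * (b - a) ^ (-s) * (b - x) ^ (s - 1) ≤ s * (b - a) ^ (-s) * c ^ (s - 1) := by
        have h1 : (0:ℝ) ≤ s * (b - a) ^ (-s) := by positivity
        exact mul_le_mul_of_nonneg_left
          (Real.rpow_le_rpow hbx hbxc (by linarith)) h1
      have hφ0 : 0 ≤ s * (b - a) ^ (-s) * (b - x) ^ (s - 1) := by positivity
      simp only [Pi.zero_apply, Real.dist_eq]
      rw [abs_sub_comm, sub_zero, abs_of_nonneg hφ0]
      exact lt_of_le_of_lt hφle hBs
    · -- integral tends to 1
      apply tendsto_const_nhds.congr'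
      filter_upwards [eventually_gt_atTop (0 : ℝ)] with s hs
      rw [MeasureTheory.integral_Icc_eq_integral_Ioc,
        ← intervalIntegral.integral_of_le hab.le]
      simp only [mul_assoc]
      rw [intervalIntegral.integral_const_mul, intervalIntegral.integral_const_mul,
        massInt a b s hs, Real.rpow_neg hba.le]
      field_simp
    · -- measurability
      filter_upwards [eventually_gt_atTop (1 : ℝ)] with s hs
      exact ((continuous_const.mul (contRpowSub b (s - 1) (by linarith)))).aestronglyMeasurable
    · exact hg.integrableOn_Icc
    · exact hg a (Set.left_mem_Icc.2 hab.le)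
  rw [show g a = g a from rfl] at key
  refine key.congr fun s => ?_
  rw [MeasureTheory.integral_Icc_eq_integral_Ioc, ← intervalIntegral.integral_of_le hab.le]
  simp [smul_eq_mul]

lemma rightLim (a b : ℝ) (hab : a < b) (g : ℝ → ℝ) (hg : ContinuousOn g (Set.Icc a b)) :
    Tendsto (fun s : ℝ => ∫ x in a..b, (s * (b - a) ^ (-s) * (x - a) ^ (s - 1)) * g x)
      atTop (𝓝 (g b)) := by
  have hmap : ∀ x ∈ Set.Icc a b, a + b - x ∈ Set.Icc a b := by
    intro x hx; exact ⟨by linarith [hx.2], by linarith [hx.1]⟩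
  have hgc : ContinuousOn (fun x => g (a + b - x)) (Set.Icc a b) :=
    hg.comp ((continuous_const.sub continuous_id).continuousOn) hmap
  have h := leftLim a b hab (fun x => g (a + b - x)) hgc
  simp only [add_sub_cancel_left] at h
  refine h.congr fun s => ?_
  have hsub := intervalIntegral.integral_comp_sub_left (a := a) (b := b)
    (fun x => (s * (b - a) ^ (-s) * (x - a) ^ (s - 1)) * g x) (a + b)
  simp only [add_sub_cancel_right, add_sub_cancel_left] at hsub
  rw [← hsub]
  congr 1
  ext x
  congr 2
  ring_nf


/-- The temperature density `w` of Theorem 2.2 (steady state formula). -/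
noncomputable def wdens (η₁ η₂ T₁ T₂ : ℝ) (T : ℝ) : ℝ :=
  if T < (η₁ * T₁ + η₂ * T₂) / (η₁ + η₂) then
    (η₁ / 2) * ((η₁ * T₁ + η₂ * T₂) / (η₁ + η₂) - T₁) ^ (-(η₁ + η₂) / 2) *
      ((η₁ * T₁ + η₂ * T₂) / (η₁ + η₂) - T) ^ ((η₁ + η₂) / 2 - 1)
  else if T = (η₁ * T₁ + η₂ * T₂) / (η₁ + η₂) then 0
  else
    (η₂ / 2) * (T₂ - (η₁ * T₁ + η₂ * T₂) / (η₁ + η₂)) ^ (-(η₁ + η₂) / 2) *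
      (T - (η₁ * T₁ + η₂ * T₂) / (η₁ + η₂)) ^ ((η₁ + η₂) / 2 - 1)

/-- As `η → ∞` (with the proportions `p₁, p₂` fixed), the measures `w_η(T) dT`
converge weakly to `p₁ δ_{T₁} + p₂ δ_{T₂}`. -/
theorem wdens_weak_limit_infty
    (T₁ T₂ : ℝ) (hT₁₂ : T₁ < T₂)
    (p₁ p₂ : ℝ) (hp₁ : 0 < p₁) (hp₂ : 0 < p₂) (hp : p₁ + p₂ = 1)
    (φ : ℝ → ℝ) (hφ : ContinuousOn φ (Set.Icc T₁ T₂)) :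
    Tendsto (fun η : ℝ => ∫ T in T₁..T₂, φ T * wdens (p₁ * η) (p₂ * η) T₁ T₂ T)
      atTop (nhds (p₁ * φ T₁ + p₂ * φ T₂)) := by
  set m : ℝ := p₁ * T₁ + p₂ * T₂ with hm
  have hq2 : 0 < p₂ * (T₂ - T₁) := mul_pos hp₂ (sub_pos.2 hT₁₂)
  have hq1 : 0 < p₁ * (T₂ - T₁) := mul_pos hp₁ (sub_pos.2 hT₁₂)
  have e1 : p₁ * T₁ + p₂ * T₁ = T₁ := by rw [← add_mul, hp, one_mul]
  have e2 : p₁ * T₂ + p₂ * T₂ = T₂ := by rw [← add_mul, hp, one_mul]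
  have h1m : T₁ < m := by rw [hm]; linarith
  have hm2 : m < T₂ := by rw [hm]; linarith
  have hsub1 : Set.Icc T₁ m ⊆ Set.Icc T₁ T₂ := Set.Icc_subset_Icc le_rfl hm2.le
  have hsub2 : Set.Icc m T₂ ⊆ Set.Icc T₁ T₂ := Set.Icc_subset_Icc h1m.le le_rfl
  have h1 := leftLim T₁ m h1m φ (hφ.mono hsub1)
  have h2 := rightLim m T₂ hm2 φ (hφ.mono hsub2)
  have hhalf : Tendsto (fun η : ℝ => η / 2) atTop atTop :=
    tendsto_id.atTop_div_const two_pos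
  have H := (((h1.const_mul p₁).add (h2.const_mul p₂)).comp hhalf)
  refine H.congr' ?_
  filter_upwards [eventually_gt_atTop (2 : ℝ)] with η hη
  have hη0 : 0 < η := by linarith
  have hs1 : 1 < η / 2 := by linarith
  have hsum : p₁ * η + p₂ * η = η := by rw [← add_mul, hp, one_mul]
  have hq : (p₁ * η * T₁ + p₂ * η * T₂) / η = m := by
    rw [hm]; field_simp
  -- equality of integrands on the two subintervals
  have eqL : Set.EqOn (fun T => φ T * wdens (p₁ * η) (p₂ * η) T₁ T₂ T)
      (fun T => p₁ * ((η / 2 * (m - T₁) ^ (-(η / 2)) * (m - T) ^ (η / 2 - 1)) * φ T))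
      (Set.uIcc T₁ m) := by
    intro T hT
    rw [Set.uIcc_of_le h1m.le] at hT
    simp only [wdens, hq, hsum]
    rcases lt_or_eq_of_le hT.2 with h | h
    · rw [if_pos h]
      rw [show -η / 2 = -(η / 2) from neg_div 2 η]
      ring
    · rw [h, if_neg (lt_irrefl m), if_pos rfl, sub_self,
        Real.zero_rpow (by linarith : (0:ℝ) < η / 2 - 1).ne']
      ring
  have eqR : Set.EqOn (fun T => φ T * wdens (p₁ * η) (p₂ * η) T₁ T₂ T)
      (fun T => p₂ * ((η / 2 * (T₂ - m) ^ (-(η / 2)) * (T - m) ^ (η / 2 - 1)) * φ T))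
      (Set.uIcc m T₂) := by
    intro T hT
    rw [Set.uIcc_of_le hm2.le] at hT
    simp only [wdens, hq, hsum]
    rcases lt_or_eq_of_le hT.1 with h | h
    · rw [if_neg (not_lt.2 h.le), if_neg h.ne']
      rw [show -η / 2 = -(η / 2) from neg_div 2 η]
      ring
    · rw [← h, if_neg (lt_irrefl m), if_pos rfl, sub_self,
        Real.zero_rpow (by linarith : (0:ℝ) < η / 2 - 1).ne']
      ring
  have contL : ContinuousOn
      (fun T => p₁ * ((η / 2 * (m - T₁) ^ (-(η / 2)) * (m - T) ^ (η / 2 - 1)) * φ T))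
      (Set.uIcc T₁ m) := by
    rw [Set.uIcc_of_le h1m.le]
    exact continuousOn_const.mul
      (((continuous_const.mul (contRpowSub m (η / 2 - 1) (by linarith))).continuousOn).mul
        (hφ.mono hsub1))
  have contR : ContinuousOn
      (fun T => p₂ * ((η / 2 * (T₂ - m) ^ (-(η / 2)) * (T - m) ^ (η / 2 - 1)) * φ T))
      (Set.uIcc m T₂) := by
    rw [Set.uIcc_of_le hm2.le]
    exact continuousOn_const.mul
      (((continuous_const.mul (contRpowSub' m (η / 2 - 1) (by linarith))).continuousOn).mul
        (hφ.mono hsub2))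
  have IL : IntervalIntegrable (fun T => φ T * wdens (p₁ * η) (p₂ * η) T₁ T₂ T)
      volume T₁ m := (contL.congr eqL).intervalIntegrable
  have IR : IntervalIntegrable (fun T => φ T * wdens (p₁ * η) (p₂ * η) T₁ T₂ T)
      volume m T₂ := (contR.congr eqR).intervalIntegrable
  show _ = ∫ T in T₁..T₂, φ T * wdens (p₁ * η) (p₂ * η) T₁ T₂ T
  rw [← intervalIntegral.integral_add_adjacent_intervals IL IR,
    intervalIntegral.integral_congr eqL, intervalIntegral.integral_congr eqR,
    intervalIntegral.integral_const_mul, intervalIntegral.integral_const_mul]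
  simp [Function.comp]
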